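/- Let x_1, …, x_N be points in ℝ^n, and let c, c' : {1, …, N} → ℝ be two injective codings inducing the same ordering of the data, i.e., c(i) < c(j) if and only if c'(i) < c'(j) for all i, j. Then the infimum over continuous decoding functions f with f(c(i)) = x_i of the arc length of f over [min_i c(i), max_i c(i)] equals the corresponding infimum for the coding c'. In particular, the one-dimensional coding measure is invariant under any strictly increasing transformation of the codes, such as z-score standardization c ↦ (c − mean(c))/std(c). -/

import Mathlib

open Finset in
private lemma coding_aux {n N : ℕ}
    (x : Fin (N + 1) → EuclideanSpace ℝ (Fin n))
    (c c' : Fin (N + 1) → ℝ)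
    (hc : Function.Injective c) (hc' : Function.Injective c')
    (horder : ∀ i j, c i < c j ↔ c' i < c' j) :
    (⨅ (f : ℝ → EuclideanSpace ℝ (Fin n)) (_ : Continuous f) (_ : ∀ i, f (c i) = x i),
        eVariationOn f (Set.Icc (⨅ i, c i) (⨆ i, c i)))
      ≤ ⨅ (f : ℝ → EuclideanSpace ℝ (Fin n)) (_ : Continuous f) (_ : ∀ i, f (c' i) = x i),
          eVariationOn f (Set.Icc (⨅ i, c' i) (⨆ i, c' i)) := by
  classical
  set σ := Tuple.sort c with hσ
  have hmono : StrictMono (c ∘ σ) :=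
    (Tuple.monotone_sort c).strictMono_of_injective (hc.comp σ.injective)
  have hmono' : StrictMono (c' ∘ σ) := fun i j h => (horder _ _).mp (hmono h)
  -- knots and values, as ℕ-indexed functions
  set A : ℕ → ℝ := fun m => c (σ ⟨min m N, Nat.lt_succ_of_le (min_le_right _ _)⟩) with hA
  set B : ℕ → ℝ := fun m => c' (σ ⟨min m N, Nat.lt_succ_of_le (min_le_right _ _)⟩) with hB
  have Amono : Monotone A := fun p q h =>
    hmono.monotone (show (⟨min p N, _⟩ : Fin (N+1)) ≤ ⟨min q N, _⟩ from
      Fin.mk_le_mk.mpr (min_le_min h le_rfl))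
  have Bmono : Monotone B := fun p q h =>
    hmono'.monotone (show (⟨min p N, _⟩ : Fin (N+1)) ≤ ⟨min q N, _⟩ from
      Fin.mk_le_mk.mpr (min_le_min h le_rfl))
  have Astrict : ∀ m, m < N → A m < A (m + 1) := by
    intro m hm
    exact hmono (show (⟨min m N, _⟩ : Fin (N+1)) < ⟨min (m+1) N, _⟩ from
      Fin.mk_lt_mk.mpr (by omega))
  have hAeq : ∀ j : Fin (N + 1), A j.val = c (σ j) := by
    intro j
    simp only [hA]
    congr 1
    exact congrArg σ (by ext; simp [Nat.min_eq_left (Nat.le_of_lt_succ j.isLt)])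
  have hBeq : ∀ j : Fin (N + 1), B j.val = c' (σ j) := by
    intro j
    simp only [hB]
    congr 1
    exact congrArg σ (by ext; simp [Nat.min_eq_left (Nat.le_of_lt_succ j.isLt)])
  -- the piecewise linear interpolation map
  set φ : ℝ → ℝ := fun t => B 0 + ∑ m ∈ range N,
      ((B (m+1) - B m) / (A (m+1) - A m)) * min (max (t - A m) 0) (A (m+1) - A m) with hφ
  have φcont : Continuous φ := by
    apply continuous_const.add
    apply continuous_finset_sum
    intro m _
    exact continuous_const.mul (((continuous_id.sub continuous_const).max
      continuous_const).min continuous_const)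
  have snonneg : ∀ m, 0 ≤ (B (m+1) - B m) / (A (m+1) - A m) := fun m =>
    div_nonneg (sub_nonneg.2 (Bmono (Nat.le_succ m))) (sub_nonneg.2 (Amono (Nat.le_succ m)))
  have φmono : Monotone φ := by
    intro s t hst
    apply add_le_add_right
    apply Finset.sum_le_sum
    intro m _
    exact mul_le_mul_of_nonneg_left
      (min_le_min (max_le_max (sub_le_sub_right hst _) le_rfl) le_rfl) (snonneg m)
  -- evaluation at knots
  have φeval : ∀ j, j ≤ N → φ (A j) = B j := by
    intro j hj
    have key : ∀ m ∈ range N,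
        ((B (m+1) - B m) / (A (m+1) - A m)) * min (max (A j - A m) 0) (A (m+1) - A m)
          = if m < j then B (m+1) - B m else 0 := by
      intro m hm
      rw [mem_range] at hm
      by_cases hmj : m < j
      · have h1 : A (m+1) ≤ A j := Amono hmj
        have h2 : A m < A (m+1) := Astrict m hm
        have hmax : max (A j - A m) 0 = A j - A m :=
          max_eq_left (by linarith)
        have hmin : min (A j - A m) (A (m+1) - A m) = A (m+1) - A m :=
          min_eq_right (by linarith)
        rw [hmax, hmin, div_mul_cancel₀ _ (by linarith : A (m+1) - A m ≠ 0), if_pos hmj]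
      · have h1 : A j ≤ A m := Amono (Nat.le_of_not_lt hmj)
        have hmax : max (A j - A m) 0 = 0 := max_eq_right (by linarith)
        rw [hmax, min_eq_left (sub_nonneg.2 (Amono (Nat.le_succ m))), mul_zero, if_neg hmj]
    rw [hφ]
    simp only
    rw [Finset.sum_congr rfl key]
    have : ∑ m ∈ range N, (if m < j then B (m+1) - B m else 0)
        = ∑ m ∈ range j, (B (m+1) - B m) := by
      rw [← Finset.sum_range_add_sum_Ico _ hj]
      have h1 : ∀ m ∈ range j, (if m < j then B (m+1) - B m else 0) = B (m+1) - B m := by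
        intro m hm; rw [if_pos (mem_range.mp hm)]
      have h2 : ∀ m ∈ Finset.Ico j N, (if m < j then B (m+1) - B m else 0) = 0 := by
        intro m hm; rw [if_neg (Nat.not_lt.mpr (Finset.mem_Ico.mp hm).1)]
      rw [Finset.sum_congr rfl h1, Finset.sum_congr rfl h2, Finset.sum_const_zero, add_zero]
    rw [this, Finset.sum_range_sub B j]
    ring
  -- identify the infima/suprema
  have hA0 : A 0 = c (σ 0) := hAeq (0 : Fin (N+1))
  have hAN : A N = c (σ (Fin.last N)) := hAeq (Fin.last N)
  have hB0 : B 0 = c' (σ 0) := hBeq (0 : Fin (N+1))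
  have hBN : B N = c' (σ (Fin.last N)) := hBeq (Fin.last N)
  have hinfc : (⨅ i, c i) = A 0 := by
    apply le_antisymm
    · rw [hA0]
      exact ciInf_le (Set.Finite.bddBelow (Set.finite_range c)) (σ 0)
    · apply le_ciInf
      intro i
      rw [hA0]
      have := hmono.monotone (Fin.zero_le (σ.symm i))
      simpa using this
  have hsupc : (⨆ i, c i) = A N := by
    apply le_antisymm
    · apply ciSup_le
      intro i
      rw [hAN]
      have := hmono.monotone (Fin.le_last (σ.symm i))
      simpa using this
    · rw [hAN]
      exact le_ciSup (Set.Finite.bddAbove (Set.finite_range c)) (σ (Fin.last N))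
  have hinfc' : (⨅ i, c' i) = B 0 := by
    apply le_antisymm
    · rw [hB0]
      exact ciInf_le (Set.Finite.bddBelow (Set.finite_range c')) (σ 0)
    · apply le_ciInf
      intro i
      rw [hB0]
      have := hmono'.monotone (Fin.zero_le (σ.symm i))
      simpa using this
  have hsupc' : (⨆ i, c' i) = B N := by
    apply le_antisymm
    · apply ciSup_le
      intro i
      rw [hBN]
      have := hmono'.monotone (Fin.le_last (σ.symm i))
      simpa using this
    · rw [hBN]
      exact le_ciSup (Set.Finite.bddAbove (Set.finite_range c')) (σ (Fin.last N))
  have φmaps : Set.MapsTo φ (Set.Icc (A 0) (A N)) (Set.Icc (B 0) (B N)) := by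
    intro t ht
    constructor
    · rw [← φeval 0 (Nat.zero_le N)]; exact φmono ht.1
    · rw [← φeval N le_rfl]; exact φmono ht.2
  -- main bound
  refine le_iInf fun f => le_iInf fun hf => le_iInf fun hfx => ?_
  have hinterp : ∀ i, (f ∘ φ) (c i) = x i := by
    intro i
    have h1 : c i = A ((σ.symm i).val) := by
      rw [hAeq (σ.symm i), Equiv.apply_symm_apply]
    have h2 : c' i = B ((σ.symm i).val) := by
      rw [hBeq (σ.symm i), Equiv.apply_symm_apply]
    simp only [Function.comp_apply, h1,
      φeval _ (Nat.le_of_lt_succ (σ.symm i).isLt), ← h2, hfx i]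
  refine iInf_le_of_le (f ∘ φ) (iInf_le_of_le (hf.comp φcont) (iInf_le_of_le hinterp ?_))
  rw [hinfc, hsupc, hinfc', hsupc']
  exact eVariationOn.comp_le_of_monotoneOn f φ (φmono.monotoneOn _) φmaps

theorem codingMeasure_invariant_of_same_order {n N : ℕ}
    (x : Fin (N + 1) → EuclideanSpace ℝ (Fin n))
    (c c' : Fin (N + 1) → ℝ)
    (hc : Function.Injective c) (hc' : Function.Injective c')
    (horder : ∀ i j, c i < c j ↔ c' i < c' j) :
    (⨅ (f : ℝ → EuclideanSpace ℝ (Fin n)) (_ : Continuous f) (_ : ∀ i, f (c i) = x i),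
        eVariationOn f (Set.Icc (⨅ i, c i) (⨆ i, c i)))
      = ⨅ (f : ℝ → EuclideanSpace ℝ (Fin n)) (_ : Continuous f) (_ : ∀ i, f (c' i) = x i),
          eVariationOn f (Set.Icc (⨅ i, c' i) (⨆ i, c' i)) :=
  le_antisymm (coding_aux x c c' hc hc' horder)
    (coding_aux x c' c hc' hc fun i j => (horder i j).symm)
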